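/- Let G be an infinite, finitely generated group and let T be an equicontinuous action of G on the Cantor space X. Then T has the pseudo-orbit tracing property. -/

import Mathlib

/-- A continuous action of a group `G` on a topological space `X`. -/
def IsContAction {G X : Type*} [Group G] [TopologicalSpace X] (T : G → X → X) : Prop :=
  (∀ g, Continuous (T g)) ∧ (∀ x, T 1 x = x) ∧ ∀ g h x, T (g * h) x = T g (T h x)

/-- `{x_g}` is a `δ` pseudo-orbit of `T` with respect to the generating set `A`. -/
def IsPseudoOrbit {G X : Type*} [Group G] [MetricSpace X] (T : G → X → X) (A : Set G)
    (δ : ℝ) (x : G → X) : Prop :=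
  ∀ a ∈ A, ∀ g : G, dist (T a (x g)) (x (a * g)) < δ

/-- The point `y` `ε`-traces the pseudo-orbit `{x_g}`. -/
def Traces {G X : Type*} [Group G] [MetricSpace X] (T : G → X → X) (ε : ℝ)
    (x : G → X) (y : X) : Prop :=
  ∀ g : G, dist (T g y) (x g) < ε

/-- `T` has the pseudo-orbit tracing property with respect to the generating set `A`. -/
def POTPWrt {G X : Type*} [Group G] [MetricSpace X] (T : G → X → X) (A : Set G) : Prop :=
  ∀ ε > (0 : ℝ), ∃ δ > (0 : ℝ), ∀ x : G → X, IsPseudoOrbit T A δ x → ∃ y : X, Traces T ε x y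

/-- `T` is `A`-topologically stable. -/
def TopStableWrt {G X : Type*} [Group G] [MetricSpace X] (T : G → X → X) (A : Set G) : Prop :=
  ∀ ε > (0 : ℝ), ∃ δ > (0 : ℝ), ∀ S : G → X → X, IsContAction S →
    (∀ a ∈ A, ∀ x : X, dist (T a x) (S a x) < δ) →
    ∃ f : X → X, Continuous f ∧ (∀ g x, T g (f x) = f (S g x)) ∧ ∀ x, dist (f x) x ≤ ε

/-- `T` is expansive with expansive constant `c`. -/
def ExpansiveWith {G X : Type*} [Group G] [MetricSpace X] (T : G → X → X) (c : ℝ) : Prop :=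
  0 < c ∧ ∀ x y : X, x ≠ y → ∃ g : G, dist (T g x) (T g y) > c

section Aux

variable {G X : Type*} [Group G] [MetricSpace X] [CompactSpace X]

/-- The invariantized (sup) metric. -/
noncomputable def invD (T : G → X → X) (x y : X) : ℝ := ⨆ g : G, dist (T g x) (T g y)

lemma invD_bdd (T : G → X → X) (x y : X) :
    BddAbove (Set.range fun g : G => dist (T g x) (T g y)) := by
  refine ⟨Metric.diam (Set.univ : Set X), ?_⟩
  rintro r ⟨g, rfl⟩
  exact Metric.dist_le_diam_of_mem Metric.isBounded_of_compactSpace trivial trivial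

lemma dist_le_invD (T : G → X → X) (hT1 : ∀ x, T 1 x = x) (x y : X) :
    dist x y ≤ invD T x y := by
  have := le_ciSup (invD_bdd T x y) (1 : G)
  simpa [hT1, invD] using this

lemma invD_symm (T : G → X → X) (x y : X) : invD T x y = invD T y x := by
  unfold invD; congr 1; ext g; exact dist_comm _ _

lemma invD_le_of_forall (T : G → X → X) {x y : X} {c : ℝ}
    (h : ∀ g : G, dist (T g x) (T g y) ≤ c) : invD T x y ≤ c :=
  ciSup_le h

lemma invD_apply_le (T : G → X → X)
    (hTm : ∀ g h x, T (g * h) x = T g (T h x)) (g : G) (x y : X) :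
    invD T (T g x) (T g y) ≤ invD T x y := by
  refine invD_le_of_forall T fun h => ?_
  rw [← hTm, ← hTm]
  exact le_ciSup (invD_bdd T x y) (h * g)

end Aux

/-- Every equicontinuous action of an infinite finitely generated group on the Cantor space
has the pseudo-orbit tracing property. -/
theorem equicontinuous_action_on_cantor_potp
    {G X : Type*} [Group G] [Infinite G] [MetricSpace X] [CompactSpace X]
    [TotallyDisconnectedSpace X] [Nonempty X]
    (hperfect : ∀ x : X, (nhdsWithin x {x}ᶜ).NeBot)
    (A : Finset G) (hAgen : Subgroup.closure (A : Set G) = ⊤)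
    (hAsymm : ∀ a ∈ A, a⁻¹ ∈ A)
    (T : G → X → X) (hT : IsContAction T)
    (hequi : ∀ ε > (0 : ℝ), ∃ δ > (0 : ℝ), ∀ x y : X, dist x y < δ →
      ∀ g : G, dist (T g x) (T g y) < ε) :
    POTPWrt T (A : Set G) := by
  obtain ⟨hTc, hT1, hTm⟩ := hT
  intro ε hε
  -- clopen neighborhoods of small diameter
  have hclop : ∀ p : X, ∃ V : Set X, IsClopen V ∧ p ∈ V ∧ V ⊆ Metric.ball p (ε / 2) := by
    intro p
    exact compact_exists_isClopen_in_isOpen Metric.isOpen_ball (Metric.mem_ball_self (by linarith))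
  choose V hVclop hVmem hVball using hclop
  -- finite subcover
  obtain ⟨t, ht⟩ := IsCompact.elim_finite_subcover isCompact_univ V
    (fun p => (hVclop p).isOpen) (fun p _ => Set.mem_iUnion.2 ⟨p, hVmem p⟩)
  have htne : t.Nonempty := by
    obtain ⟨p⟩ := (inferInstance : Nonempty X)
    obtain ⟨q, hq, _⟩ := Set.mem_iUnion₂.1 (ht (Set.mem_univ p))
    exact ⟨q, hq⟩
  -- gap of each clopen piece
  have hgap : ∀ p : X, ∃ ρ > (0:ℝ), ∀ u ∈ V p, ∀ v : X, dist u v < ρ → v ∈ V p := by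
    intro p
    by_cases hc : ((V p)ᶜ : Set X).Nonempty
    · have hVcomp : IsCompact (V p) := (hVclop p).isClosed.isCompact
      have hcl : IsClosed ((V p)ᶜ) := (hVclop p).isOpen.isClosed_compl
      have hcont : Continuous fun u : X => Metric.infDist u ((V p)ᶜ) :=
        Metric.continuous_infDist_pt _
      obtain ⟨u0, hu0, hmin⟩ := hVcomp.exists_isMinOn ⟨p, hVmem p⟩ hcont.continuousOn
      have hpos : 0 < Metric.infDist u0 ((V p)ᶜ) :=
        (hcl.notMem_iff_infDist_pos hc).1 (by simpa using hu0)
      refine ⟨Metric.infDist u0 ((V p)ᶜ), hpos, fun u hu v hv => ?_⟩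
      by_contra hvn
      have h1 : Metric.infDist u ((V p)ᶜ) ≤ dist u v :=
        Metric.infDist_le_dist_of_mem hvn
      have h2 := hmin hu
      simp only [Set.mem_setOf_eq] at h2
      exact absurd hv (not_lt.2 (le_trans (le_trans h2 h1) (le_refl _)))
    · refine ⟨1, one_pos, fun u _ v _ => ?_⟩
      rcases Set.not_nonempty_iff_eq_empty.1 hc with h
      have : V p = Set.univ := by
        rw [← Set.compl_empty_iff]; exact h
      simp [this]
  choose ρ hρpos hρ using hgap
  set r : ℝ := t.inf' htne ρ with hr
  have hrpos : 0 < r := by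
    rw [hr]
    exact (Finset.lt_inf'_iff htne).2 fun p hp => hρpos p
  -- equicontinuity: dist < δ implies invD < r
  obtain ⟨δ, hδpos, hδ⟩ := hequi (r / 2) (by linarith)
  have hδD : ∀ u v : X, dist u v < δ → invD T u v < r := by
    intro u v huv
    have : invD T u v ≤ r / 2 :=
      invD_le_of_forall T fun g => (hδ u v huv g).le
    linarith
  refine ⟨δ, hδpos, fun x hx => ?_⟩
  set y := x 1 with hy
  -- the chain relation
  set step : X → X → Prop := fun u v => invD T u v < r with hstep
  set Chain : X → X → Prop := Relation.ReflTransGen step with hChain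
  have step_symm : ∀ u v, step u v → step v u := by
    intro u v h
    show invD T v u < r
    rw [invD_symm]
    exact h
  have chain_inv : ∀ (g : G) (u v : X), Chain u v → Chain (T g u) (T g v) := by
    intro g u v h
    exact Relation.ReflTransGen.lift (p := step) (T g)
      (fun a b hab => lt_of_le_of_lt (invD_apply_le T hTm g a b) hab) u v h
  -- chains preserve membership in the cover pieces
  have chain_mem : ∀ u v : X, Chain u v → ∀ p ∈ t, u ∈ V p → v ∈ V p := by
    intro u v h
    induction h with
    | refl => exact fun p _ h => h
    | tail _ hbc ih =>
        intro p hp hu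
        rename_i b c _
        have hb := ih p hp hu
        have hd : dist b c < ρ p := by
          have h1 : dist b c ≤ invD T b c := dist_le_invD T hT1 b c
          have h2 : r ≤ ρ p := Finset.inf'_le _ hp
          calc dist b c ≤ invD T b c := h1
            _ < r := hbc
            _ ≤ ρ p := h2
        exact hρ p b hb c hd
  -- every group element is a product of a list from A
  have hmon : ∀ g : G, g ∈ Submonoid.closure (A : Set G) := by
    intro g
    have hg : g ∈ Subgroup.closure (A : Set G) := by rw [hAgen]; trivial
    have : g ∈ Submonoid.closure (A : Set G) ∧ g⁻¹ ∈ Submonoid.closure (A : Set G) := by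
      refine Subgroup.closure_induction (k := (A : Set G))
        (p := fun g _ => g ∈ Submonoid.closure (A : Set G) ∧
          g⁻¹ ∈ Submonoid.closure (A : Set G)) ?_ ?_ ?_ ?_ hg
      · intro a ha
        exact ⟨Submonoid.subset_closure ha, Submonoid.subset_closure (hAsymm a ha)⟩
      · simp [Submonoid.one_mem]
      · rintro a b _ _ ⟨ha1, ha2⟩ ⟨hb1, hb2⟩
        refine ⟨Submonoid.mul_mem _ ha1 hb1, ?_⟩
        rw [mul_inv_rev]; exact Submonoid.mul_mem _ hb2 ha2
      · rintro a _ ⟨ha1, ha2⟩; exact ⟨ha2, by simpa using ha1⟩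
    exact this.1
  -- main induction on words
  have main : ∀ l : List G, (∀ a ∈ l, a ∈ (A : Set G)) → ∀ k : G,
      Chain (x (l.prod * k)) (T l.prod (x k)) := by
    intro l
    induction l with
    | nil =>
        intro _ k
        simp only [List.prod_nil, one_mul, hT1]
        exact Relation.ReflTransGen.refl
    | cons a s ih =>
        intro hmem k
        have ha : a ∈ (A : Set G) := hmem a List.mem_cons_self
        have hs : ∀ b ∈ s, b ∈ (A : Set G) := fun b hb => hmem b (List.mem_cons_of_mem a hb)
        rw [List.prod_cons]
        have step1 : step (x (a * s.prod * k)) (T a (x (s.prod * k))) := by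
          apply step_symm
          exact hδD _ _ (by rw [mul_assoc]; exact hx a ha (s.prod * k))
        have chain2 : Chain (T a (x (s.prod * k))) (T (a * s.prod) (x k)) := by
          rw [hTm]
          exact chain_inv a _ _ (ih hs k)
        exact Relation.ReflTransGen.trans (Relation.ReflTransGen.single step1) chain2
  refine ⟨y, fun g => ?_⟩
  obtain ⟨l, hl, hlprod⟩ := Submonoid.exists_list_of_mem_closure (hmon g)
  have hchain : Chain (x g) (T g y) := by
    have := main l hl 1
    rw [hlprod, mul_one] at this
    exact this
  -- both ends in the same piece of the cover
  obtain ⟨p, hp, hxg⟩ := Set.mem_iUnion₂.1 (ht (Set.mem_univ (x g)))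
  have hTy : T g y ∈ V p := chain_mem _ _ hchain p hp hxg
  have h1 := hVball p hxg
  have h2 := hVball p hTy
  rw [Metric.mem_ball] at h1 h2
  calc dist (T g y) (x g) ≤ dist (T g y) p + dist p (x g) := dist_triangle _ _ _
    _ = dist (T g y) p + dist (x g) p := by rw [dist_comm p (x g)]
    _ < ε / 2 + ε / 2 := by linarith
    _ = ε := by linarith
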